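/- Let ξ = a + bi with a > 0, 0 < b < π/2, and cosh a · cos b > 1/2, and let φ be the complex number with cosh φ = cosh ξ − 1/2, Re φ > 0 and 0 < Im φ < π. Write φ = c + di. Then arsinh(sinh a · sin b) < c < a and b < d < π/2. -/

import Mathlib

lemma cosh_re_im (x y : ℝ) :
    Complex.cosh (x + y * Complex.I) =
      Complex.ofReal (Real.cosh x * Real.cos y) + Complex.ofReal (Real.sinh x * Real.sin y) * Complex.I := by
  rw [Complex.cosh_add, Complex.cosh_mul_I, Complex.sinh_mul_I]
  push_cast [← Complex.ofReal_cosh, ← Complex.ofReal_sinh, ← Complex.ofReal_cos, ← Complex.ofReal_sin]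
  ring

theorem phi_location (a b : ℝ) (φ : ℂ)
    (ha : 0 < a) (hb0 : 0 < b) (hb : b < Real.pi / 2)
    (hα : Real.cosh a * Real.cos b > 1 / 2)
    (hφ : Complex.cosh φ = Complex.cosh (a + b * Complex.I) - 1 / 2)
    (hc : 0 < φ.re) (hd0 : 0 < φ.im) (hd : φ.im < Real.pi) :
    Real.arsinh (Real.sinh a * Real.sin b) < φ.re ∧ φ.re < a ∧
      b < φ.im ∧ φ.im < Real.pi / 2 := by
  set c := φ.re with hcdef
  set d := φ.im with hddef
  rw [← Complex.re_add_im φ, ← hcdef, ← hddef, cosh_re_im, cosh_re_im] at hφ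
  have h1 : Real.cosh c * Real.cos d = Real.cosh a * Real.cos b - 1/2 := by
    have := congrArg Complex.re hφ
    simpa [Complex.cos_ofReal_re] using this
  have h2 : Real.sinh c * Real.sin d = Real.sinh a * Real.sin b := by
    have := congrArg Complex.im hφ
    simpa [Complex.sin_ofReal_re, Complex.sinh_ofReal_re] using this
  -- basic positivity
  have hsinb : 0 < Real.sin b := Real.sin_pos_of_pos_of_lt_pi hb0 (by linarith [Real.pi_pos])
  have hcosb : 0 < Real.cos b := Real.cos_pos_of_mem_Ioo ⟨by linarith [Real.pi_pos], hb⟩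
  have hsind : 0 < Real.sin d := Real.sin_pos_of_pos_of_lt_pi hd0 hd
  have hsinha : 0 < Real.sinh a := Real.sinh_pos_iff.2 ha
  have hsinhc : 0 < Real.sinh c := Real.sinh_pos_iff.2 hc
  have hcoshc : 1 < Real.cosh c := Real.one_lt_cosh.2 (ne_of_gt hc)
  have hcosha : 1 < Real.cosh a := Real.one_lt_cosh.2 (ne_of_gt ha)
  -- cos d > 0, hence d < π/2
  have hcosd : 0 < Real.cos d := by
    nlinarith [Real.cosh_pos c]
  have hdlt : d < Real.pi / 2 := by
    by_contra h
    push_neg at h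
    have := Real.cos_nonpos_of_pi_div_two_le_of_le h (by linarith [Real.pi_pos])
    linarith
  -- sin d < 1
  have hsind1 : Real.sin d < 1 := by
    nlinarith [Real.sin_sq_add_cos_sq d]
  -- arsinh bound
  have harsinh : Real.arsinh (Real.sinh a * Real.sin b) < c := by
    rw [← Real.arsinh_sinh c, Real.arsinh_lt_arsinh]
    nlinarith
  -- pythagorean identities
  have pc := Real.sin_sq_add_cos_sq d
  have pb := Real.sin_sq_add_cos_sq b
  have qc := Real.cosh_sq c
  have qa := Real.cosh_sq a
  -- abbreviations
  have hu : 0 < Real.cosh c * Real.cos d := mul_pos (Real.cosh_pos c) hcosd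
  have huA : Real.cosh c * Real.cos d < Real.cosh a * Real.cos b := by linarith
  have h2sq : (Real.sinh c * Real.sin d) ^ 2 = (Real.sinh a * Real.sin b) ^ 2 := by rw [h2]
  have e1 : Real.cosh c ^ 2 + Real.cos d ^ 2 =
      1 + (Real.cosh c * Real.cos d) ^ 2 + (Real.sinh c * Real.sin d) ^ 2 := by
    linear_combination (1 - Real.cos d ^ 2) * qc + (-(Real.sinh c ^ 2)) * pc
  have e2 : Real.cosh a ^ 2 + Real.cos b ^ 2 =
      1 + (Real.cosh a * Real.cos b) ^ 2 + (Real.sinh a * Real.sin b) ^ 2 := by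
    linear_combination (1 - Real.cos b ^ 2) * qa + (-(Real.sinh a ^ 2)) * pb
  have keyF : (Real.cosh a ^ 2 - Real.cosh c ^ 2) * (Real.cosh a ^ 2 - Real.cos d ^ 2) =
      ((Real.cosh a * Real.cos b) ^ 2 - (Real.cosh c * Real.cos d) ^ 2) * (Real.cosh a ^ 2 - 1) := by
    linear_combination (-(Real.cosh a ^ 2)) * e1 + (-(Real.cosh a ^ 2)) * h2sq +
      (Real.cosh a ^ 2) * e2
  have keyG : (Real.cos b ^ 2 - Real.cosh c ^ 2) * (Real.cos b ^ 2 - Real.cos d ^ 2) =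
      ((Real.cosh a * Real.cos b) ^ 2 - (Real.cosh c * Real.cos d) ^ 2) * (Real.cos b ^ 2 - 1) := by
    linear_combination (-(Real.cos b ^ 2)) * e1 + (-(Real.cos b ^ 2)) * h2sq +
      (Real.cos b ^ 2) * e2
  have hAu : (Real.cosh c * Real.cos d) ^ 2 < (Real.cosh a * Real.cos b) ^ 2 :=
    pow_lt_pow_left₀ huA hu.le two_ne_zero
  have hsinb2 : 0 < Real.sin b ^ 2 := pow_pos hsinb 2
  have hcosb1 : Real.cos b ^ 2 < 1 := by linarith
  have hXa1 : 1 < Real.cosh a ^ 2 := one_lt_pow₀ hcosha two_ne_zero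
  have hXc1 : 1 < Real.cosh c ^ 2 := one_lt_pow₀ hcoshc two_ne_zero
  -- c < a
  have hca : c < a := by
    have h5 : 0 < Real.cosh a ^ 2 - Real.cos d ^ 2 := by
      have := Real.cos_sq_le_one d
      linarith
    have hrhs : 0 < ((Real.cosh a * Real.cos b) ^ 2 - (Real.cosh c * Real.cos d) ^ 2) *
        (Real.cosh a ^ 2 - 1) := mul_pos (by linarith) (by linarith)
    have hprod : 0 < (Real.cosh a ^ 2 - Real.cosh c ^ 2) * (Real.cosh a ^ 2 - Real.cos d ^ 2) := by
      rw [keyF]; exact hrhs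
    have h6 : Real.cosh c ^ 2 < Real.cosh a ^ 2 := by
      by_contra h
      push_neg at h
      have := mul_nonpos_of_nonpos_of_nonneg (by linarith :
        Real.cosh a ^ 2 - Real.cosh c ^ 2 ≤ 0) h5.le
      linarith
    have h7 : Real.cosh c < Real.cosh a := lt_of_pow_lt_pow_left₀ 2 (Real.cosh_pos a).le h6
    have := Real.cosh_lt_cosh.1 h7
    rwa [abs_of_pos hc, abs_of_pos ha] at this
  -- b < d
  have hbd : b < d := by
    have hrhs : ((Real.cosh a * Real.cos b) ^ 2 - (Real.cosh c * Real.cos d) ^ 2) *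
        (Real.cos b ^ 2 - 1) < 0 :=
      mul_neg_of_pos_of_neg (by linarith) (by linarith)
    have hprod : (Real.cos b ^ 2 - Real.cosh c ^ 2) * (Real.cos b ^ 2 - Real.cos d ^ 2) < 0 := by
      rw [keyG]; exact hrhs
    have h6 : Real.cos d ^ 2 < Real.cos b ^ 2 := by
      by_contra h
      push_neg at h
      have h8 := mul_nonneg (neg_nonneg.2 (by linarith :
        Real.cos b ^ 2 - Real.cosh c ^ 2 ≤ 0)) (neg_nonneg.2 (by linarith :
        Real.cos b ^ 2 - Real.cos d ^ 2 ≤ 0))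
      rw [neg_mul_neg] at h8
      linarith
    have h7 : Real.cos d < Real.cos b := lt_of_pow_lt_pow_left₀ 2 hcosb.le h6
    by_contra h
    push_neg at h
    have := Real.cos_le_cos_of_nonneg_of_le_pi (le_of_lt hd0) (by linarith [Real.pi_pos]) h
    linarith
  exact ⟨harsinh, hca, hbd, hdlt⟩
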